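/- A set F of reduction operators relative to a well-ordered set (G,<) is confluent if and only if every element of K⟨G⟩ admits a unique F-normal form. -/

import Mathlib

/-- `T` is a reduction operator relative to `(G,<)`. -/
def IsRedOp {K G : Type*} [Field K] [LinearOrder G]
    (T : Module.End K (G →₀ K)) : Prop :=
  T ∘ₗ T = T ∧ ∀ g : G, T (Finsupp.single g 1) = Finsupp.single g 1 ∨
    ∀ g' ∈ (T (Finsupp.single g 1)).support, g' < g

section Aux

variable {K G : Type*} [Field K] [LinearOrder G]

lemma apply_eq_sum (T : Module.End K (G →₀ K)) (v : G →₀ K) :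
    T v = ∑ a ∈ v.support, v a • T (Finsupp.single a 1) := by
  conv_lhs => rw [← Finsupp.sum_single v]
  rw [Finsupp.sum, map_sum]
  exact Finset.sum_congr rfl fun a _ => by
    rw [← Finsupp.smul_single_one, map_smul]

/-- Reduction operators do not increase the support with respect to lower sets. -/
lemma redop_support_lower {T : Module.End K (G →₀ K)} (hT : IsRedOp T)
    {s : Set G} (hs : IsLowerSet s) {w : G →₀ K} (hw : ↑w.support ⊆ s) :
    ↑(T w).support ⊆ s := by
  classical
  intro h hh
  simp only [Finset.mem_coe] at hh
  rw [apply_eq_sum] at hh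
  obtain ⟨a, ha, hha⟩ := Finset.mem_biUnion.1 (Finsupp.support_finset_sum hh)
  have hha' : h ∈ (T (Finsupp.single a 1)).support := Finsupp.support_smul hha
  rcases hT.2 a with hfix | hlt
  · rw [hfix] at hha'
    have := Finsupp.support_single_subset hha'
    simp only [Finset.mem_singleton] at this
    exact this ▸ hw ha
  · exact hs (hlt h hha').le (hw ha)

/-- The coefficient of `T v` at `g` vanishes when `g` is the largest non-`T`-fixed
element of the support of `v`. -/
lemma redop_coeff_self {T : Module.End K (G →₀ K)} (hT : IsRedOp T) {v : G →₀ K} {g : G}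
    (hfix : ∀ h ∈ v.support, g < h → T (Finsupp.single h 1) = Finsupp.single h 1)
    (hg : T (Finsupp.single g 1) ≠ Finsupp.single g 1) :
    T v g = 0 := by
  rw [apply_eq_sum, Finsupp.finset_sum_apply]
  refine Finset.sum_eq_zero fun a ha => ?_
  rw [Finsupp.smul_apply, smul_eq_mul]
  rcases hT.2 a with hfa | hlt
  · have hag : a ≠ g := fun h => hg (h ▸ hfa)
    rw [hfa, Finsupp.single_eq_of_ne' hag, mul_zero]
  · have h0 : T (Finsupp.single a 1) g = 0 := by
      by_contra h0
      have hmem : g ∈ (T (Finsupp.single a 1)).support := Finsupp.mem_support_iff.2 h0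
      have hga : g < a := hlt g hmem
      rw [hfix a ha hga] at hmem
      have := Finsupp.support_single_subset hmem
      simp only [Finset.mem_singleton] at this
      exact absurd (this ▸ hga) (lt_irrefl a)
    rw [h0, mul_zero]

/-- Coefficients above `g` are unchanged. -/
lemma redop_coeff_gt {T : Module.End K (G →₀ K)} (hT : IsRedOp T) {v : G →₀ K} {g : G}
    (hfix : ∀ h ∈ v.support, g < h → T (Finsupp.single h 1) = Finsupp.single h 1)
    {h : G} (hgh : g < h) : T v h = v h := by
  classical
  rw [apply_eq_sum, Finsupp.finset_sum_apply]
  have key : ∀ a ∈ v.support, (v a • T (Finsupp.single a 1)) h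
      = if a = h then v a else 0 := by
    intro a ha
    rw [Finsupp.smul_apply, smul_eq_mul]
    by_cases hah : a = h
    · subst hah
      rw [hfix a ha hgh, Finsupp.single_eq_same, mul_one, if_pos rfl]
    · rw [if_neg hah]
      rcases hT.2 a with hfa | hlt
      · rw [hfa, Finsupp.single_eq_of_ne' hah, mul_zero]
      · have h0 : T (Finsupp.single a 1) h = 0 := by
          by_contra h0
          have hmem : h ∈ (T (Finsupp.single a 1)).support := Finsupp.mem_support_iff.2 h0
          have hha : h < a := hlt h hmem
          rw [hfix a ha (hgh.trans hha)] at hmem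
          have := Finsupp.support_single_subset hmem
          simp only [Finset.mem_singleton] at this
          exact hah this.symm
        rw [h0, mul_zero]
  rw [Finset.sum_congr rfl key, Finset.sum_ite_eq' v.support h (fun a => v a)]
  by_cases hmem : h ∈ v.support
  · rw [if_pos hmem]
  · rw [if_neg hmem, (Finsupp.notMem_support_iff.1 hmem).symm]

/-- An operator fixing the singles over `s` fixes everything supported on `s`. -/
lemma fix_of_fix_singles {R : Module.End K (G →₀ K)} {s : Set G}
    (hfix : ∀ g ∈ s, R (Finsupp.single g 1) = Finsupp.single g 1)
    {u : G →₀ K} (hu : ↑u.support ⊆ s) : R u = u := by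
  rw [apply_eq_sum]
  conv_rhs => rw [← Finsupp.sum_single u]
  rw [Finsupp.sum]
  exact Finset.sum_congr rfl fun a ha => by
    rw [hfix a (hu ha), Finsupp.smul_single_one]

end Aux

section Aux2
set_option linter.unusedSectionVars false
variable {K G : Type*} [Field K] [LinearOrder G]
variable {F : Set (Module.End K (G →₀ K))}

/-- Elements of the closure fix singles of commonly reduced elements. -/
lemma closure_fix_singles {s : Set G}
    (hs : ∀ T ∈ F, ∀ g ∈ s, T (Finsupp.single g 1) = Finsupp.single g 1)
    {R : Module.End K (G →₀ K)} (hR : R ∈ Submonoid.closure F) :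
    ∀ g ∈ s, R (Finsupp.single g 1) = Finsupp.single g 1 := by
  induction hR using Submonoid.closure_induction with
  | mem T hT => exact hs T hT
  | one => intro g _; exact Module.End.one_apply _
  | mul R S hR hS ihR ihS =>
      intro g hg
      rw [Module.End.mul_apply, ihS g hg, ihR g hg]

lemma closure_support_lower (hF : ∀ T ∈ F, IsRedOp T)
    {R : Module.End K (G →₀ K)} (hR : R ∈ Submonoid.closure F)
    {s : Set G} (hs : IsLowerSet s) :
    ∀ w : G →₀ K, ↑w.support ⊆ s → ↑(R w).support ⊆ s := by
  induction hR using Submonoid.closure_induction with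
  | mem T hT => exact fun w hw => redop_support_lower (hF T hT) hs hw
  | one => intro w hw; rwa [Module.End.one_apply]
  | mul R S hR hS ihR ihS =>
      intro w hw
      rw [Module.End.mul_apply]
      exact ihR _ (ihS _ hw)

lemma closure_sub_mem (hF : ∀ T ∈ F, IsRedOp T)
    {R : Module.End K (G →₀ K)} (hR : R ∈ Submonoid.closure F) :
    ∀ w : G →₀ K, w - R w ∈ ⨆ T ∈ F, LinearMap.ker T := by
  induction hR using Submonoid.closure_induction with
  | mem T hT =>
      intro w
      refine (le_iSup₂ (f := fun (T : Module.End K (G →₀ K)) (_ : T ∈ F) =>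
        LinearMap.ker T) T hT) ?_
      rw [LinearMap.mem_ker, map_sub, sub_eq_zero]
      exact (LinearMap.congr_fun (hF T hT).1 w).symm
  | one =>
      intro w
      rw [Module.End.one_apply, sub_self]
      exact Submodule.zero_mem _
  | mul R S hR hS ihR ihS =>
      intro w
      have := Submodule.add_mem _ (ihS w) (ihR (S w))
      rw [sub_add_sub_cancel] at this
      rwa [Module.End.mul_apply]

/-- Existence of normal forms. -/
lemma exists_normal_form [WellFoundedLT G] (hF : ∀ T ∈ F, IsRedOp T) (v : G →₀ K) :
    ∃ R ∈ Submonoid.closure F, ∀ h ∈ (R v).support,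
      ∀ T ∈ F, T (Finsupp.single h 1) = Finsupp.single h 1 := by
  classical
  set RedF : Set G := {g | ∀ T ∈ F, T (Finsupp.single g 1) = Finsupp.single g 1} with hRedF
  have aux : ∀ g : G, ∀ v : G →₀ K, g ∈ v.support → g ∉ RedF →
      (∀ h ∈ v.support, h ∉ RedF → h ≤ g) →
      ∃ R ∈ Submonoid.closure F, ∀ h ∈ (R v).support, h ∈ RedF := by
    intro g
    induction g using WellFoundedLT.induction with
    | _ g IH =>
      intro v hgmem hgnr hmax
      have hgnr' : ∃ T ∈ F, T (Finsupp.single g 1) ≠ Finsupp.single g 1 := by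
        by_contra hc
        push_neg at hc
        exact hgnr fun T hT => hc T hT
      obtain ⟨T, hTF, hTg⟩ := hgnr'
      have hfix : ∀ h ∈ v.support, g < h →
          T (Finsupp.single h 1) = Finsupp.single h 1 := by
        intro h hh hgh
        by_cases hr : h ∈ RedF
        · exact hr T hTF
        · exact absurd (hmax h hh hr) (not_le.2 hgh)
      have hself : T v g = 0 := redop_coeff_self (hF T hTF) hfix hTg
      by_cases hall : ∀ h ∈ (T v).support, h ∈ RedF
      · exact ⟨T, Submonoid.subset_closure hTF, hall⟩
      · push_neg at hall
        obtain ⟨h0, h0mem, h0nr⟩ := hall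
        set s' := (T v).support.filter (fun h => h ∉ RedF) with hs'
        have hs'ne : s'.Nonempty := ⟨h0, Finset.mem_filter.2 ⟨h0mem, h0nr⟩⟩
        set g' := s'.max' hs'ne with hg'
        have hg'mem : g' ∈ (T v).support ∧ g' ∉ RedF :=
          Finset.mem_filter.1 (s'.max'_mem hs'ne)
        have hg'max : ∀ h ∈ (T v).support, h ∉ RedF → h ≤ g' :=
          fun h hh hnr => Finset.le_max' s' h (Finset.mem_filter.2 ⟨hh, hnr⟩)
        have hg'lt : g' < g := by
          rcases lt_trichotomy g' g with h | h | h
          · exact h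
          · exact absurd (h ▸ hg'mem.1) (by simp [Finsupp.mem_support_iff, hself])
          · have : T v g' = v g' := redop_coeff_gt (hF T hTF) hfix h
            have hmem : g' ∈ v.support := by
              rw [Finsupp.mem_support_iff, ← this, ← Finsupp.mem_support_iff]
              exact hg'mem.1
            exact absurd (hmax g' hmem hg'mem.2) (not_le.2 h)
        obtain ⟨R, hR, hRred⟩ := IH g' hg'lt (T v) hg'mem.1 hg'mem.2 hg'max
        refine ⟨R * T, mul_mem hR (Submonoid.subset_closure hTF), ?_⟩
        intro h hh
        rw [Module.End.mul_apply] at hh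
        exact hRred h hh
  by_cases hv : ∀ h ∈ v.support, h ∈ RedF
  · exact ⟨1, one_mem _, by rwa [Module.End.one_apply]⟩
  · push_neg at hv
    obtain ⟨h0, h0mem, h0nr⟩ := hv
    set s0 := v.support.filter (fun h => h ∉ RedF) with hs0
    have hs0ne : s0.Nonempty := ⟨h0, Finset.mem_filter.2 ⟨h0mem, h0nr⟩⟩
    set g0 := s0.max' hs0ne with hg0
    have hg0mem : g0 ∈ v.support ∧ g0 ∉ RedF :=
      Finset.mem_filter.1 (s0.max'_mem hs0ne)
    exact aux g0 v hg0mem.1 hg0mem.2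
      (fun h hh hnr => Finset.le_max' s0 h (Finset.mem_filter.2 ⟨hh, hnr⟩))

end Aux2

/-- `F` is confluent iff every element of `K⟨G⟩` admits a unique `F`-normal
form.  Here `W` denotes `∧F`. -/
theorem confluent_iff_unique_normal_form {K G : Type*} [Field K] [LinearOrder G]
    [WellFoundedLT G] (F : Set (Module.End K (G →₀ K)))
    (hF : ∀ T ∈ F, IsRedOp T) (W : Module.End K (G →₀ K)) (hW : IsRedOp W)
    (hker : LinearMap.ker W = ⨆ T ∈ F, LinearMap.ker T) :
    ({g : G | ∀ T ∈ F, T (Finsupp.single g 1) = Finsupp.single g 1} ⊆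
        {g : G | W (Finsupp.single g 1) = Finsupp.single g 1}) ↔
      ∀ v : G →₀ K, ∃! u : G →₀ K,
        u ∈ Submodule.span K
          ((fun g => Finsupp.single g (1 : K)) ''
            {g : G | ∀ T ∈ F, T (Finsupp.single g 1) = Finsupp.single g 1}) ∧
        ∃ R ∈ Submonoid.closure F, R v = u := by
  classical
  set RedF : Set G := {g : G | ∀ T ∈ F, T (Finsupp.single g 1) = Finsupp.single g 1}
    with hRedF
  have hspan : Submodule.span K ((fun g => Finsupp.single g (1 : K)) '' RedF)
      = Finsupp.supported K K RedF := (Finsupp.supported_eq_span_single K RedF).symm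
  constructor
  · -- confluence → unique normal forms
    intro hconf v
    obtain ⟨R, hR, hRred⟩ := exists_normal_form hF v
    have hRmem : R v ∈ Submodule.span K ((fun g => Finsupp.single g (1 : K)) '' RedF) := by
      rw [hspan, Finsupp.mem_supported]
      exact fun h hh => hRred h hh
    refine ⟨R v, ⟨hRmem, R, hR, rfl⟩, ?_⟩
    rintro u' ⟨hu'span, R', hR', rfl⟩
    -- difference lies in ker W and is fixed by W
    have hd : R' v - R v ∈ LinearMap.ker W := by
      rw [hker]
      have h1 := closure_sub_mem hF hR v
      have h2 := closure_sub_mem hF hR' v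
      have := Submodule.sub_mem _ h1 h2
      rwa [sub_sub_sub_cancel_left] at this
    have hdsup : ↑(R' v - R v).support ⊆ RedF := by
      rw [hspan, Finsupp.mem_supported] at hRmem hu'span
      intro h hh
      rcases Finset.mem_union.1 (Finsupp.support_sub hh) with h1 | h1
      · exact hu'span h1
      · exact hRmem h1
    have hdfix : W (R' v - R v) = R' v - R v :=
      fix_of_fix_singles (s := RedF) (fun g' hg' => hconf hg') hdsup
    have : R' v - R v = 0 := by
      rw [← hdfix]
      exact LinearMap.mem_ker.1 hd
    exact sub_eq_zero.1 this
  · -- unique normal forms → confluence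
    intro h g hg
    by_contra hne
    have hWg : ∀ g' ∈ (W (Finsupp.single g 1)).support, g' < g := by
      rcases hW.2 g with hfix | hlt
      · exact absurd hfix hne
      · exact hlt
    -- normal form predicate
    set NF : (G →₀ K) → (G →₀ K) → Prop := fun v u =>
      (u ∈ Submodule.span K ((fun g => Finsupp.single g (1 : K)) '' RedF) ∧
        ∃ R ∈ Submonoid.closure F, R v = u) with hNF
    have huniq : ∀ v u1 u2, NF v u1 → NF v u2 → u1 = u2 := fun v u1 u2 h1 h2 =>
      ((h v).unique h1 h2)
    have hex : ∀ v, ∃ u, NF v u := fun v => (h v).exists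
    have nf_apply : ∀ R ∈ Submonoid.closure F, ∀ v u, NF (R v) u → NF v u := by
      intro R hR
      induction hR using Submonoid.closure_induction with
      | mem T hT =>
          rintro v u ⟨hu, R', hR', hval⟩
          exact ⟨hu, R' * T, mul_mem hR' (Submonoid.subset_closure hT),
            by rwa [Module.End.mul_apply]⟩
      | one => intro v u hu; rwa [Module.End.one_apply] at hu
      | mul R S hR hS ihR ihS =>
          intro v u hu
          rw [Module.End.mul_apply] at hu
          exact ihS _ _ (ihR _ _ hu)
    have claimD : ∀ x ∈ (⨆ T ∈ F, LinearMap.ker T :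
        Submodule K (G →₀ K)), NF x 0 := by
      intro x hx
      have hx' : x ∈ ⨆ T : F, LinearMap.ker (T : Module.End K (G →₀ K)) := by
        rwa [iSup_subtype'] at hx
      refine Submodule.iSup_induction (motive := fun x => NF x 0) _ hx' ?_ ?_ ?_
      · rintro ⟨T, hT⟩ x hxT
        exact ⟨Submodule.zero_mem _, T, Submonoid.subset_closure hT,
          LinearMap.mem_ker.1 hxT⟩
      · exact ⟨Submodule.zero_mem _, 1, one_mem _, by rw [Module.End.one_apply]⟩
      · intro x y hx hy
        obtain ⟨-, R1, hR1, hR1x⟩ := hx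
        obtain ⟨u2, hu2⟩ := hex (R1 y)
        have hu20 : u2 = 0 := huniq y u2 0 (nf_apply R1 hR1 y u2 hu2) hy
        have : NF (R1 (x + y)) 0 := by
          rw [map_add, hR1x, zero_add]
          exact hu20 ▸ hu2
        exact nf_apply R1 hR1 _ 0 this
    -- apply to single g - W (single g)
    have hxker : Finsupp.single g 1 - W (Finsupp.single g 1) ∈ LinearMap.ker W := by
      rw [LinearMap.mem_ker, map_sub, sub_eq_zero]
      exact (LinearMap.congr_fun hW.1 (Finsupp.single g 1)).symm
    rw [hker] at hxker
    obtain ⟨-, R, hR, hRx⟩ := claimD _ hxker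
    rw [map_sub, sub_eq_zero] at hRx
    have hleft : R (Finsupp.single g 1) = Finsupp.single g 1 :=
      closure_fix_singles (s := RedF) (fun T hT g' hg' => hg' T hT) hR g hg
    have hright : ↑(R (W (Finsupp.single g 1))).support ⊆ Set.Iio g := by
      refine closure_support_lower hF hR (isLowerSet_Iio g) _ ?_
      intro h hh
      exact hWg h hh
    rw [← hRx, hleft] at hright
    have : g ∈ Set.Iio g := hright (by
      rw [Finset.mem_coe, Finsupp.mem_support_iff, Finsupp.single_eq_same]
      exact one_ne_zero)
    exact lt_irrefl g this
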